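/- With A_k^(n) defined recursively as in the paper, the vertical stacking S^(n) = [A_0^(n); A_1^(n); ...; A_n^(n)] lists all 2^n vertices of {0,1}^n in increasing Hales order from top to bottom. -/

import Mathlib

open Finset

/-- Hamming weight of a vertex of the hypercube `{0,1}^n`. -/
def wt {n : ℕ} (u : Fin n → Bool) : ℕ := (Finset.univ.filter fun i => u i = true).card

/-- `u` is strictly greater than `v` in lexicographic order relative to the
right-to-left order of the coordinates. -/
def rtlLexGT {n : ℕ} (u v : Fin n → Bool) : Prop :=
  ∃ i, v i < u i ∧ ∀ j, i < j → u j = v j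

/-- The Hales order on `{0,1}^n`. -/
def halesLE {n : ℕ} (u v : Fin n → Bool) : Prop :=
  wt u < wt v ∨ (wt u = wt v ∧ (u = v ∨ rtlLexGT u v))

/-- The recursively defined matrices `A_k^{(n)}`, encoded as lists of rows. -/
def A : (n : ℕ) → (k : ℕ) → List (Fin n → Bool)
  | _, 0 => [fun _ => false]
  | 0, _ + 1 => []
  | n + 1, k + 1 =>
    if k + 1 = n + 1 then [fun _ => true]
    else (A n k).map (fun u => Fin.snoc u true) ++ (A n (k + 1)).map (fun u => Fin.snoc u false)

/-- The stacking `S^{(n)} = [A_0^{(n)}; …; A_n^{(n)}]`. -/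
def Sl (n : ℕ) : List (Fin n → Bool) := (List.range (n + 1)).flatMap (A n)

/-- Entry `(i, j)` (0-based) of the adjacency matrix `M^{(n)}_{k,k'}` between the
weight-`k` and weight-`k'` levels of the hypercube, both in Hales order. -/
def Mval (n k k' : ℕ) (i j : ℕ) : ℕ :=
  if hammingDist ((A n k).getD i (fun _ => false)) ((A n k').getD j (fun _ => false)) = 1
  then 1 else 0

/-- Manhattan radius `r(M^{(n)}_{k,k'})`. -/
def mr (n k k' : ℕ) : ℕ :=
  ((Finset.range (A n k).length) ×ˢ (Finset.range (A n k').length)).sup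
    (fun p => if Mval n k k' p.1 p.2 ≠ 0 then (A n k).length - p.1 + p.2 else 0)

/-- Bandwidth of a numbering of the hypercube. -/
def numBW (n : ℕ) (η : (Fin n → Bool) ≃ Fin (2 ^ n)) : ℕ :=
  Finset.univ.sup fun p : (Fin n → Bool) × (Fin n → Bool) =>
    if hammingDist p.1 p.2 = 1 then Nat.dist (η p.1) (η p.2) else 0

/-- Bandwidth of the hypercube `Q^{(n)}`. -/
noncomputable def cubeBW (n : ℕ) : ℕ := sInf (Set.range (numBW n))

/-- Minimum edge-distance of a numbering of the hypercube. -/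
noncomputable def abwOf (n : ℕ) (η : (Fin n → Bool) ≃ Fin (2 ^ n)) : ℕ :=
  sInf {d | ∃ u v : Fin n → Bool, hammingDist u v = 1 ∧ d = Nat.dist (η u) (η v)}

/-- Antibandwidth of the hypercube `Q^{(n)}`. -/
noncomputable def cubeABW (n : ℕ) : ℕ := sSup (Set.range (abwOf n))

/-- Bandwidth of the full Hales-ordered adjacency matrix `M^{(n)}`. -/
def bwM (n : ℕ) : ℕ :=
  ((Finset.range (Sl n).length) ×ˢ (Finset.range (Sl n).length)).sup
    (fun p =>
      if hammingDist ((Sl n).getD p.1 (fun _ => false)) ((Sl n).getD p.2 (fun _ => false)) = 1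
      then Nat.dist p.1 p.2 else 0)

/-- Manhattan radius of a general `s × t` matrix. -/
def manRadius {s t : ℕ} (M : Matrix (Fin s) (Fin t) ℕ) : ℕ :=
  Finset.univ.sup fun p : Fin s × Fin t => if M p.1 p.2 ≠ 0 then s - (p.1 : ℕ) + p.2 else 0

lemma wt_snoc {n : ℕ} (u : Fin n → Bool) (b : Bool) :
    wt (Fin.snoc u b) = wt u + if b then 1 else 0 := by
  unfold wt
  rw [Finset.card_filter, Finset.card_filter, Fin.sum_univ_castSucc]
  simp [Fin.snoc_castSucc, Fin.snoc_last]

lemma wt_le {n : ℕ} (u : Fin n → Bool) : wt u ≤ n := by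
  simpa [wt] using (Finset.card_filter_le Finset.univ (fun i => u i = true))

lemma wt_zero {n : ℕ} (u : Fin n → Bool) (h : wt u = 0) : u = fun _ => false := by
  funext i
  unfold wt at h
  rw [Finset.card_eq_zero, Finset.filter_eq_empty_iff] at h
  simpa using h (Finset.mem_univ i)

lemma wt_top {n : ℕ} (u : Fin n → Bool) (h : wt u = n) : u = fun _ => true := by
  funext i
  unfold wt at h
  have huniv : (Finset.univ.filter fun i => u i = true) = Finset.univ :=
    Finset.eq_univ_of_card _ (by rw [h, Fintype.card_fin])
  rw [Finset.eq_univ_iff_forall] at huniv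
  simpa using (Finset.mem_filter.mp (huniv i)).2

lemma rtlLexGT_snoc {n : ℕ} {u v : Fin n → Bool} (b : Bool) (h : rtlLexGT u v) :
    rtlLexGT (Fin.snoc u b) (Fin.snoc v b) := by
  obtain ⟨i, hi, hj⟩ := h
  refine ⟨i.castSucc, by simpa using hi, ?_⟩
  intro j hj'
  cases j using Fin.lastCases with
  | last => simp
  | cast j =>
    simp only [Fin.snoc_castSucc]
    exact hj j (by simpa [Fin.castSucc_lt_castSucc_iff] using hj')

lemma rtlLexGT_snoc_tf {n : ℕ} (u v : Fin n → Bool) :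
    rtlLexGT (Fin.snoc u true) (Fin.snoc v false) := by
  refine ⟨Fin.last n, by simp, ?_⟩
  intro j hj
  exact absurd hj (Fin.le_last j).not_gt

lemma rtlLexGT_ne {n : ℕ} {u v : Fin n → Bool} (h : rtlLexGT u v) : u ≠ v := by
  obtain ⟨i, hi, -⟩ := h
  intro h'
  subst h'
  exact lt_irrefl _ hi

lemma wt_of_mem_A : ∀ n k (u : Fin n → Bool), u ∈ A n k → wt u = k := by
  intro n
  induction n with
  | zero =>
    intro k u hu
    match k with
    | 0 =>
      simp only [A, List.mem_singleton] at hu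
      subst hu; simp [wt]
    | k + 1 => simp [A] at hu
  | succ n ih =>
    intro k u hu
    match k with
    | 0 =>
      simp only [A, List.mem_singleton] at hu
      subst hu; simp [wt]
    | k + 1 =>
      rw [A] at hu
      split at hu
      · next h =>
        simp only [List.mem_singleton] at hu
        subst hu
        rw [← h]; simp [wt]
      · rw [List.mem_append] at hu
        rcases hu with hu | hu <;> rw [List.mem_map] at hu <;>
          obtain ⟨v, hv, rfl⟩ := hu <;> rw [wt_snoc, ih _ _ hv] <;> simp

lemma mem_A_of_wt : ∀ n k (u : Fin n → Bool), wt u = k → u ∈ A n k := by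
  intro n
  induction n with
  | zero =>
    intro k u hw
    have hk : k = 0 := hw ▸ Nat.le_zero.mp (wt_le u)
    subst hk
    have := wt_zero u hw
    simp [A, this]
  | succ n ih =>
    intro k u hw
    match k with
    | 0 =>
      have := wt_zero u hw
      simp [A, this]
    | k + 1 =>
      rw [A]
      split
      · next h =>
        have hk : k + 1 = n + 1 := h
        have := wt_top u (by rw [hw, hk])
        simp [this]
      · next h =>
        have hu : u = Fin.snoc (Fin.init u) (u (Fin.last n)) := (Fin.snoc_init_self u).symm
        have hwt : wt u = wt (Fin.init u) + if u (Fin.last n) then 1 else 0 := by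
          conv_lhs => rw [hu]
          exact wt_snoc _ _
        rw [List.mem_append]
        cases hb : u (Fin.last n) with
        | true =>
          left
          rw [List.mem_map]
          refine ⟨Fin.init u, ih _ _ ?_, by rw [← hb, Fin.snoc_init_self]⟩
          rw [hb] at hwt; simp at hwt; omega
        | false =>
          right
          rw [List.mem_map]
          refine ⟨Fin.init u, ih _ _ ?_, by rw [← hb, Fin.snoc_init_self]⟩
          rw [hb] at hwt; simp at hwt; omega

lemma pairwise_A : ∀ n k, (A n k).Pairwise rtlLexGT := by
  intro n
  induction n with
  | zero =>
    intro k
    match k with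
    | 0 => simp [A]
    | k + 1 => simp [A]
  | succ n ih =>
    intro k
    match k with
    | 0 => simp [A]
    | k + 1 =>
      rw [A]
      split
      · simp
      · rw [List.pairwise_append]
        refine ⟨?_, ?_, ?_⟩
        · rw [List.pairwise_map]
          exact (ih k).imp (rtlLexGT_snoc _)
        · rw [List.pairwise_map]
          exact (ih (k + 1)).imp (rtlLexGT_snoc _)
        · intro a ha b hb
          rw [List.mem_map] at ha hb
          obtain ⟨x, -, rfl⟩ := ha
          obtain ⟨y, -, rfl⟩ := hb
          exact rtlLexGT_snoc_tf x y

/-- The stacking `S^{(n)} = [A_0^{(n)}; …; A_n^{(n)}]` lists all `2^n`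
vertices of `{0,1}^n` in strictly increasing Hales order from top to bottom. -/
theorem S_lists_all_in_hales_order (n : ℕ) :
    (∀ u : Fin n → Bool, u ∈ Sl n) ∧ (Sl n).length = 2 ^ n ∧
      (Sl n).Pairwise (fun u v => halesLE u v ∧ u ≠ v) := by
  have hmem : ∀ u : Fin n → Bool, u ∈ Sl n := by
    intro u
    unfold Sl
    rw [List.mem_flatMap]
    exact ⟨wt u, List.mem_range.mpr (Nat.lt_succ_of_le (wt_le u)), mem_A_of_wt n _ u rfl⟩
  have hpw : (Sl n).Pairwise (fun u v => halesLE u v ∧ u ≠ v) := by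
    unfold Sl
    rw [List.flatMap_def, List.pairwise_flatten]
    constructor
    · intro l hl
      rw [List.mem_map] at hl
      obtain ⟨k, -, rfl⟩ := hl
      refine (pairwise_A n k).imp_of_mem ?_
      intro u v hu hv h
      have hwu := wt_of_mem_A n k u hu
      have hwv := wt_of_mem_A n k v hv
      exact ⟨Or.inr ⟨hwu.trans hwv.symm, Or.inr h⟩, rtlLexGT_ne h⟩
    · rw [List.pairwise_map]
      refine (List.pairwise_lt_range (n := n + 1)).imp ?_
      intro k k' hkk' u hu v hv
      have hwu := wt_of_mem_A n k u hu
      have hwv := wt_of_mem_A n k' v hv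
      have hlt : wt u < wt v := by omega
      exact ⟨Or.inl hlt, fun h => by rw [h] at hlt; omega⟩
  refine ⟨hmem, ?_, hpw⟩
  have nd : (Sl n).Nodup := hpw.imp (fun h => h.2)
  have huniv : (Sl n).toFinset = Finset.univ :=
    Finset.eq_univ_of_forall (fun u => List.mem_toFinset.mpr (hmem u))
  calc (Sl n).length = (Sl n).toFinset.card := (List.toFinset_card_of_nodup nd).symm
    _ = 2 ^ n := by rw [huniv]; simp
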